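/- Let A be an n×n complex matrix, B an n×m complex matrix, C an m×n complex matrix, and D an m×m complex matrix, and suppose the (n+m)×(n+m) block matrix [[A, B], [C, D]] is unitary, i.e. [[Aᴴ, Cᴴ], [Bᴴ, Dᴴ]] · [[A, B], [C, D]] = I. If D is invertible, then A is invertible and Cᴴ(Dᴴ)⁻¹D⁻¹C + I = A⁻¹(Aᴴ)⁻¹. -/

import Mathlib

open Matrix

/-- If the block matrix `[[A, B], [C, D]]` is unitary (its conjugate transpose
times itself is the identity) and `D` is invertible, then `A` is invertible and
`Cᴴ (Dᴴ)⁻¹ D⁻¹ C + I = A⁻¹ (Aᴴ)⁻¹`. -/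
theorem stmt5 {n m : ℕ} (A : Matrix (Fin n) (Fin n) ℂ)
    (B : Matrix (Fin n) (Fin m) ℂ) (C : Matrix (Fin m) (Fin n) ℂ)
    (D : Matrix (Fin m) (Fin m) ℂ)
    (hU : (Matrix.fromBlocks A B C D)ᴴ * Matrix.fromBlocks A B C D = 1)
    (hD : IsUnit D) :
    IsUnit A ∧ Cᴴ * (Dᴴ)⁻¹ * D⁻¹ * C + 1 = A⁻¹ * (Aᴴ)⁻¹ := by
  have hDdet : IsUnit D.det := (Matrix.isUnit_iff_isUnit_det D).mp hD
  have hDinv : D * D⁻¹ = 1 := Matrix.mul_nonsing_inv D hDdet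
  have hDHinv : Dᴴ * (D⁻¹)ᴴ = 1 := by
    rw [← conjTranspose_mul, Matrix.nonsing_inv_mul D hDdet, conjTranspose_one]
  have hDHinv' : (D⁻¹)ᴴ * Dᴴ = 1 := by
    rw [← conjTranspose_mul, hDinv, conjTranspose_one]
  have hDH : IsUnit Dᴴ := (Matrix.isUnit_iff_isUnit_det Dᴴ).mpr
    (by rw [Matrix.det_conjTranspose]; exact hDdet.star)
  have hDHinveq : (Dᴴ)⁻¹ = (D⁻¹)ᴴ := by
    exact Matrix.inv_eq_right_inv hDHinv
  -- row relations
  have hMM : Matrix.fromBlocks A B C D * (Matrix.fromBlocks A B C D)ᴴ = 1 :=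
    mul_eq_one_comm.mpr hU
  rw [Matrix.fromBlocks_conjTranspose, Matrix.fromBlocks_multiply,
    ← Matrix.fromBlocks_one] at hMM
  obtain ⟨h11, h12, -, -⟩ := Matrix.fromBlocks_inj.mp hMM
  -- h11 : A * Aᴴ + B * Bᴴ = 1, h12 : A * Cᴴ + B * Dᴴ = 0
  have hB : B = -(A * Cᴴ * (Dᴴ)⁻¹) := by
    have : B * Dᴴ = -(A * Cᴴ) := by linear_combination (norm := noncomm_ring) h12
    calc B = B * (Dᴴ * (Dᴴ)⁻¹) := by
            rw [hDHinveq, hDHinv, Matrix.mul_one]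
      _ = (B * Dᴴ) * (Dᴴ)⁻¹ := by rw [Matrix.mul_assoc]
      _ = -(A * Cᴴ * (Dᴴ)⁻¹) := by rw [this, Matrix.neg_mul]
  have hBH : Bᴴ = -(D⁻¹ * C * Aᴴ) := by
    rw [hB]; simp [conjTranspose_mul, conjTranspose_neg, hDHinveq, Matrix.mul_assoc]
  have hBB : B * Bᴴ = A * Cᴴ * (Dᴴ)⁻¹ * (D⁻¹ * C * Aᴴ) := by
    rw [hB]
    simp [conjTranspose_neg, conjTranspose_mul, hDHinveq, Matrix.mul_assoc]
  have key : A * ((Cᴴ * (Dᴴ)⁻¹ * D⁻¹ * C + 1) * Aᴴ) = 1 := by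
    have hsplit : (Cᴴ * (Dᴴ)⁻¹ * D⁻¹ * C + 1) * Aᴴ
        = Cᴴ * (Dᴴ)⁻¹ * D⁻¹ * C * Aᴴ + Aᴴ := by
      rw [Matrix.add_mul, Matrix.one_mul]
    have h2 : A * (Cᴴ * (Dᴴ)⁻¹ * D⁻¹ * C * Aᴴ) = B * Bᴴ := by
      rw [hBB]; simp [Matrix.mul_assoc]
    rw [hsplit, Matrix.mul_add, h2, add_comm]
    exact h11
  have hA : IsUnit A := (Matrix.isUnit_iff_isUnit_det A).mpr
    (IsUnit.of_mul_eq_one _ (by rw [← Matrix.det_mul, key, Matrix.det_one]))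
  have hAinv : A⁻¹ = (Cᴴ * (Dᴴ)⁻¹ * D⁻¹ * C + 1) * Aᴴ := Matrix.inv_eq_right_inv key
  have hAHdet : IsUnit Aᴴ.det := by
    rw [Matrix.det_conjTranspose]
    exact ((Matrix.isUnit_iff_isUnit_det A).mp hA).star
  refine ⟨hA, ?_⟩
  calc Cᴴ * (Dᴴ)⁻¹ * D⁻¹ * C + 1
      = (Cᴴ * (Dᴴ)⁻¹ * D⁻¹ * C + 1) * (Aᴴ * (Aᴴ)⁻¹) := by
        rw [Matrix.mul_nonsing_inv Aᴴ hAHdet, Matrix.mul_one]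
    _ = ((Cᴴ * (Dᴴ)⁻¹ * D⁻¹ * C + 1) * Aᴴ) * (Aᴴ)⁻¹ := (Matrix.mul_assoc _ _ _).symm
    _ = A⁻¹ * (Aᴴ)⁻¹ := by rw [← hAinv]
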